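/- The capacity of the q-ary partial erasure channel equals 1 - ε·log_q(M), measured in q-ary symbols per channel use; that is, max over input distributions {p_x} of I(X;Y) = log q - ε·log M (in nats/bits), attained by the uniform input distribution p_x = 1/q. -/

import Mathlib

lemma aux_gibbs (a b n : ℝ) (ha : 0 ≤ a) (hb : 0 ≤ b) (hn : 0 < n) (hab : a ≤ n * b) :
    -(a * Real.log a) ≤ -(a * Real.log b) + (b - a) := by
  rcases eq_or_lt_of_le ha with h | h
  · rw [← h]; simpa using hb
  · have hb' : 0 < b := by nlinarith
    have key : Real.log (b / a) ≤ b / a - 1 := Real.log_le_sub_one_of_pos (by positivity)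
    rw [Real.log_div hb'.ne' h.ne'] at key
    have h2 : a * (Real.log b - Real.log a) ≤ a * (b / a - 1) :=
      mul_le_mul_of_nonneg_left key h.le
    have h3 : a * (b / a - 1) = b - a := by field_simp
    nlinarith

lemma aux_count (q M : ℕ) (hM : 1 ≤ M) (x : Fin q) :
    (Finset.univ.filter (fun y : Finset (Fin q) => y.card = M ∧ x ∈ y)).card
      = (q - 1).choose (M - 1) := by
  have hcard : (Finset.univ.erase x).card = q - 1 := by
    rw [Finset.card_erase_of_mem (Finset.mem_univ x), Finset.card_univ, Fintype.card_fin]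
  rw [← hcard, ← Finset.card_powersetCard (M - 1) (Finset.univ.erase x)]
  refine Finset.card_nbij' (fun y : Finset (Fin q) => y.erase x) (fun z => insert x z) ?_ ?_ ?_ ?_
  · intro y hy
    simp only [Finset.mem_coe, Finset.mem_filter, Finset.mem_univ, true_and] at hy
    rw [Finset.mem_coe, Finset.mem_powersetCard]
    constructor
    · exact Finset.erase_subset_erase x (Finset.subset_univ y)
    · rw [Finset.card_erase_of_mem hy.2, hy.1]
  · intro z hz
    rw [Finset.mem_coe, Finset.mem_powersetCard] at hz
    have hxz : x ∉ z := fun hx => (Finset.mem_erase.mp (hz.1 hx)).1 rfl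
    simp only [Finset.mem_coe, Finset.mem_filter, Finset.mem_univ, true_and]
    constructor
    · rw [Finset.card_insert_of_notMem hxz, hz.2]; omega
    · exact Finset.mem_insert_self x z
  · intro y hy
    simp only [Finset.mem_coe, Finset.mem_filter, Finset.mem_univ, true_and] at hy
    exact Finset.insert_erase hy.2
  · intro z hz
    rw [Finset.mem_coe, Finset.mem_powersetCard] at hz
    exact Finset.erase_insert (fun hx => (Finset.mem_erase.mp (hz.1 hx)).1 rfl)
-- goal about card equality of powersetCard vs choose

theorem qpec_capacity (q M : ℕ) (hq : 2 ≤ q) (hM : 2 ≤ M) (hMq : M ≤ q)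
    (ε : ℝ) (hε0 : 0 ≤ ε) (hε1 : ε ≤ 1)
    (P : Fin q → Finset (Fin q) → ℝ)
    (hP : ∀ x y, P x y =
      if y = {x} then 1 - ε
      else if y.card = M ∧ x ∈ y then ε / ((q - 1).choose (M - 1)) else 0)
    (I : (Fin q → ℝ) → ℝ)
    (hI : ∀ p, I p =
      (-∑ y : Finset (Fin q), (∑ x, p x * P x y) * Real.log (∑ x, p x * P x y))
        - (-∑ x, p x * ∑ y : Finset (Fin q), P x y * Real.log (P x y))) :
    IsGreatest (I '' {p | (∀ x, 0 ≤ p x) ∧ ∑ x, p x = 1})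
        (Real.log q - ε * Real.log M)
      ∧ I (fun _ => 1 / q) = Real.log q - ε * Real.log M := by
  have hq0 : (0 : ℝ) < q := by
    have : 0 < q := by omega
    exact_mod_cast this
  have hM0 : (0 : ℝ) < M := by
    have : 0 < M := by omega
    exact_mod_cast this
  set C : ℝ := ((q - 1).choose (M - 1) : ℝ) with hC
  have hCpos : 0 < C := by
    rw [hC]
    exact_mod_cast Nat.choose_pos (by omega)
  have hPnn : ∀ x y, 0 ≤ P x y := by
    intro x y
    rw [hP]
    split_ifs
    · linarith
    · positivity
    · exact le_refl 0
  -- the key splitting lemma for sums of the form ∑ y, P x y * g y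
  have hinner : ∀ (x : Fin q) (g : Finset (Fin q) → ℝ) (w : ℝ),
      (∀ y : Finset (Fin q), y.card = M → x ∈ y → g y = w) →
      ∑ y : Finset (Fin q), P x y * g y = (1 - ε) * g {x} + ε * w := by
    intro x g w hgw
    have hsplit : ∀ y : Finset (Fin q), P x y * g y =
        (if y = {x} then (1 - ε) * g y else 0)
        + (if y.card = M ∧ x ∈ y then (ε / C) * g y else 0) := by
      intro y
      rw [hP x y]
      by_cases h1 : y = {x}
      · have h2 : ¬(y.card = M ∧ x ∈ y) := by
          subst h1
          rintro ⟨h, -⟩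
          rw [Finset.card_singleton] at h
          omega
        rw [if_pos h1, if_pos h1, if_neg h2, add_zero]
      · rw [if_neg h1, if_neg h1, zero_add]
        split_ifs with h2
        · rfl
        · ring
    rw [Finset.sum_congr rfl fun y _ => hsplit y, Finset.sum_add_distrib]
    congr 1
    · simp
    · rw [← Finset.sum_filter]
      have h3 : ∑ y ∈ Finset.univ.filter (fun y : Finset (Fin q) => y.card = M ∧ x ∈ y),
            (ε / C) * g y
          = ∑ _y ∈ Finset.univ.filter (fun y : Finset (Fin q) => y.card = M ∧ x ∈ y),
            (ε / C) * w := by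
        refine Finset.sum_congr rfl fun y hy => ?_
        simp only [Finset.mem_filter] at hy
        rw [hgw y hy.2.1 hy.2.2]
      rw [h3, Finset.sum_const, aux_count q M (by omega) x, nsmul_eq_mul, ← hC]
      field_simp
  have hPsum : ∀ x, ∑ y : Finset (Fin q), P x y = 1 := by
    intro x
    have h := hinner x (fun _ => (1 : ℝ)) 1 (fun _ _ _ => rfl)
    simp only [mul_one] at h
    rw [h]
    ring
  have hlogP : ∀ x, ∑ y : Finset (Fin q), P x y * Real.log (P x y)
      = (1 - ε) * Real.log (1 - ε) + ε * Real.log (ε / C) := by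
    intro x
    have hg : ∀ y : Finset (Fin q), y.card = M → x ∈ y →
        Real.log (P x y) = Real.log (ε / C) := by
      intro y h1 h2
      have hne : y ≠ {x} := by
        intro h
        rw [h, Finset.card_singleton] at h1
        omega
      rw [hP, if_neg hne, if_pos ⟨h1, h2⟩]
    have h := hinner x (fun y => Real.log (P x y)) (Real.log (ε / C)) hg
    have hPxx : P x {x} = 1 - ε := by rw [hP]; simp
    rw [h]
    simp only [hPxx]
  have hQu1 : ∀ x0 : Fin q, ∑ x, (1 / (q : ℝ)) * P x {x0} = (1 - ε) / q := by
    intro x0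
    have hPx : ∀ x : Fin q, P x {x0} = if x0 = x then 1 - ε else 0 := by
      intro x
      rw [hP]
      have hcard : ¬(({x0} : Finset (Fin q)).card = M ∧ x ∈ ({x0} : Finset (Fin q))) := by
        rintro ⟨h1, -⟩
        rw [Finset.card_singleton] at h1
        omega
      rw [if_neg hcard]
      simp only [Finset.singleton_inj]
    rw [Finset.sum_congr rfl fun x _ => by rw [hPx x]]
    simp only [mul_ite, mul_zero]
    rw [Finset.sum_ite_eq Finset.univ x0 (fun _ => 1 / (q : ℝ) * (1 - ε))]
    simp only [Finset.mem_univ, if_true]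
    ring
  have hQuM : ∀ y : Finset (Fin q), y.card = M →
      ∑ x, (1 / (q : ℝ)) * P x y = ε * M / (q * C) := by
    intro y hc
    have hPx : ∀ x : Fin q, P x y = if x ∈ y then ε / C else 0 := by
      intro x
      rw [hP]
      have hne : y ≠ {x} := by
        intro h
        rw [h, Finset.card_singleton] at hc
        omega
      rw [if_neg hne]
      simp only [hc, true_and]
    rw [Finset.sum_congr rfl fun x _ => by rw [hPx x]]
    simp only [mul_ite, mul_zero]
    rw [Finset.sum_ite_mem, Finset.univ_inter, Finset.sum_const, hc, nsmul_eq_mul]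
    field_simp
  have hswap : ∀ (p : Fin q → ℝ) (g : Finset (Fin q) → ℝ),
      ∑ y : Finset (Fin q), (∑ x, p x * P x y) * g y
        = ∑ x, p x * ∑ y : Finset (Fin q), P x y * g y := by
    intro p g
    simp_rw [Finset.sum_mul, Finset.mul_sum]
    rw [Finset.sum_comm]
    simp_rw [mul_assoc]
  have hu1 : ∑ _x : Fin q, (1 / (q : ℝ)) = 1 := by
    rw [Finset.sum_const, Finset.card_univ, Fintype.card_fin, nsmul_eq_mul]
    field_simp
  have hQsum : ∀ p : Fin q → ℝ, ∑ x, p x = 1 →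
      ∑ y : Finset (Fin q), (∑ x, p x * P x y) = 1 := by
    intro p hp1
    have h := hswap p (fun _ => 1)
    simp only [mul_one] at h
    rw [h, Finset.sum_congr rfl fun x _ => by rw [hPsum x]]
    simp only [mul_one]
    exact hp1
  have hKp : ∀ p : Fin q → ℝ, ∑ x, p x = 1 →
      ∑ y : Finset (Fin q), (∑ x, p x * P x y) * Real.log (∑ x, (1 / (q : ℝ)) * P x y)
        = (1 - ε) * Real.log ((1 - ε) / q) + ε * Real.log (ε * M / (q * C)) := by
    intro p hp1
    rw [hswap p (fun y => Real.log (∑ x, (1 / (q : ℝ)) * P x y))]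
    have hx : ∀ x : Fin q,
        ∑ y : Finset (Fin q), P x y * Real.log (∑ x', (1 / (q : ℝ)) * P x' y)
          = (1 - ε) * Real.log ((1 - ε) / q) + ε * Real.log (ε * M / (q * C)) := by
      intro x
      have h := hinner x (fun y => Real.log (∑ x', (1 / (q : ℝ)) * P x' y))
        (Real.log (ε * M / (q * C))) (fun y hc _ => by beta_reduce; rw [hQuM y hc])
      rw [h]
      beta_reduce
      rw [hQu1 x]
    rw [Finset.sum_congr rfl fun x _ => by rw [hx x], ← Finset.sum_mul, hp1, one_mul]
  have hfinal : ((1 - ε) * Real.log (1 - ε) + ε * Real.log (ε / C))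
      - ((1 - ε) * Real.log ((1 - ε) / q) + ε * Real.log (ε * M / (q * C)))
      = Real.log q - ε * Real.log M := by
    have h1 : (1 - ε) * (Real.log (1 - ε) - Real.log ((1 - ε) / q))
        = (1 - ε) * Real.log q := by
      rcases eq_or_lt_of_le hε1 with h | h
      · rw [← h]; ring
      · have h0 : (0 : ℝ) < 1 - ε := by linarith
        rw [Real.log_div h0.ne' hq0.ne']
        ring
    have h2 : ε * (Real.log (ε / C) - Real.log (ε * M / (q * C)))
        = ε * (Real.log q - Real.log M) := by
      rcases eq_or_lt_of_le hε0 with h | h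
      · rw [← h]; ring
      · rw [Real.log_div h.ne' hCpos.ne', Real.log_div (by positivity) (by positivity),
          Real.log_mul h.ne' hM0.ne', Real.log_mul hq0.ne' hCpos.ne']
        ring
    nlinarith [h1, h2, sq_nonneg ε]
  have huI : I (fun _ => 1 / (q : ℝ)) = Real.log q - ε * Real.log M := by
    rw [hI]
    rw [hKp (fun _ => 1 / (q : ℝ)) hu1]
    rw [Finset.sum_congr rfl fun x _ => by rw [hlogP x], ← Finset.sum_mul, hu1, one_mul]
    linarith [hfinal]
  have hub : ∀ p : Fin q → ℝ, (∀ x, 0 ≤ p x) → ∑ x, p x = 1 →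
      I p ≤ Real.log q - ε * Real.log M := by
    intro p hp0 hp1
    rw [hI]
    have hc2 : ∑ x, p x * ∑ y : Finset (Fin q), P x y * Real.log (P x y)
        = (1 - ε) * Real.log (1 - ε) + ε * Real.log (ε / C) := by
      rw [Finset.sum_congr rfl fun x _ => by rw [hlogP x], ← Finset.sum_mul, hp1, one_mul]
    have hple1 : ∀ x, p x ≤ 1 := by
      intro x
      rw [← hp1]
      exact Finset.single_le_sum (fun i _ => hp0 i) (Finset.mem_univ x)
    have hgb : ∀ y : Finset (Fin q),
        -((∑ x, p x * P x y) * Real.log (∑ x, p x * P x y))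
        ≤ -((∑ x, p x * P x y) * Real.log (∑ x, (1 / (q : ℝ)) * P x y))
          + ((∑ x, (1 / (q : ℝ)) * P x y) - (∑ x, p x * P x y)) := by
      intro y
      refine aux_gibbs _ _ q ?_ ?_ hq0 ?_
      · exact Finset.sum_nonneg fun x _ => mul_nonneg (hp0 x) (hPnn x y)
      · exact Finset.sum_nonneg fun x _ => mul_nonneg (by positivity) (hPnn x y)
      · rw [Finset.mul_sum]
        refine Finset.sum_le_sum fun x _ => ?_
        rw [← mul_assoc, mul_one_div_cancel hq0.ne', one_mul]
        exact mul_le_of_le_one_left (hPnn x y) (hple1 x)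
    have hsum := Finset.sum_le_sum fun y (_ : y ∈ (Finset.univ : Finset (Finset (Fin q)))) => hgb y
    rw [Finset.sum_add_distrib, Finset.sum_sub_distrib] at hsum
    rw [Finset.sum_neg_distrib, Finset.sum_neg_distrib] at hsum
    rw [hQsum p hp1, hQsum (fun _ => 1 / (q : ℝ)) hu1, hKp p hp1] at hsum
    rw [hc2]
    linarith [hfinal, hsum]
  refine ⟨⟨⟨fun _ => 1 / (q : ℝ), ⟨fun x => by positivity, hu1⟩, huI⟩, ?_⟩, huI⟩
  rintro v ⟨p, ⟨hp0, hp1⟩, rfl⟩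
  exact hub p hp0 hp1
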